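/- arXiv:2104.14763 — 2 statements merged into one kernel-verified Lean document; each statement's English description precedes it below -/
import Mathlib

section
/- (Triangle inequality of the geodesic distance at the identity.) For all A, B ∈ SO(3), ∠(A, B) ≤ ∠(A, I₃) + ∠(B, I₃), where I₃ is the 3×3 identity matrix; explicitly, arccos((tr(AᵀB) − 1)/2) ≤ arccos((tr(A) − 1)/2) + arccos((tr(B) − 1)/2). -/
/-- The special orthogonal group SO(3): real 3×3 matrices `R` with `Rᵀ * R = 1` and `det R = 1`. -/
def SO3 (R : Matrix (Fin 3) (Fin 3) ℝ) : Prop :=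
  R.transpose * R = 1 ∧ R.det = 1

/-- Action of a 3×3 matrix on ℝ³ (with Euclidean norm) by matrix–vector multiplication. -/
noncomputable def rotAct (R : Matrix (Fin 3) (Fin 3) ℝ) (v : EuclideanSpace ℝ (Fin 3)) :
    EuclideanSpace ℝ (Fin 3) :=
  Matrix.toEuclideanLin R v

/-- Geodesic distance between two rotations: `∠(X, Y) = |arccos((tr(XᵀY) − 1)/2)|`. -/
noncomputable def geo (X Y : Matrix (Fin 3) (Fin 3) ℝ) : ℝ :=
  |Real.arccos ((Matrix.trace (X.transpose * Y) - 1) / 2)|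

namespace SO3Tri

noncomputable def qf (R : Matrix (Fin 3) (Fin 3) ℝ) (v0 v1 v2 : ℝ) : ℝ :=
  v0 * (R 0 0 * v0 + R 0 1 * v1 + R 0 2 * v2) +
  v1 * (R 1 0 * v0 + R 1 1 * v1 + R 1 2 * v2) +
  v2 * (R 2 0 * v0 + R 2 1 * v1 + R 2 2 * v2)

lemma so3_cols (R : Matrix (Fin 3) (Fin 3) ℝ) (hR : SO3 R) (i j : Fin 3) :
    R 0 i * R 0 j + R 1 i * R 1 j + R 2 i * R 2 j = if i = j then 1 else 0 := by
  have h := congrFun (congrFun hR.1 i) j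
  simpa [Matrix.mul_apply, Fin.sum_univ_three, Matrix.one_apply] using h

lemma so3_rows (R : Matrix (Fin 3) (Fin 3) ℝ) (hR : SO3 R) (i j : Fin 3) :
    R i 0 * R j 0 + R i 1 * R j 1 + R i 2 * R j 2 = if i = j then 1 else 0 := by
  have h1 : R * R.transpose = 1 := mul_eq_one_comm.mp hR.1
  have h := congrFun (congrFun h1 i) j
  simpa [Matrix.mul_apply, Fin.sum_univ_three, Matrix.one_apply] using h

lemma so3_adj (R : Matrix (Fin 3) (Fin 3) ℝ) (hR : SO3 R) :
    R.adjugate = R.transpose := by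
  have h1 : R * R.transpose = 1 := mul_eq_one_comm.mp hR.1
  calc R.adjugate = R.adjugate * (R * R.transpose) := by rw [h1, mul_one]
    _ = (R.adjugate * R) * R.transpose := by rw [mul_assoc]
    _ = R.transpose := by rw [Matrix.adjugate_mul, hR.2, one_smul, one_mul]

lemma so3_key (R : Matrix (Fin 3) (Fin 3) ℝ) (hR : SO3 R) (v0 v1 v2 : ℝ) :
    (Matrix.trace R + 1) *
      (2 * qf R v0 v1 v2 - (Matrix.trace R - 1) * (v0 ^ 2 + v1 ^ 2 + v2 ^ 2)) =
    ((R 2 1 - R 1 2) * v0 + (R 0 2 - R 2 0) * v1 + (R 1 0 - R 0 1) * v2) ^ 2 := by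
  have hc00 : R 0 0 * R 0 0 + R 1 0 * R 1 0 + R 2 0 * R 2 0 = 1 := by
    simpa using so3_cols R hR 0 0
  have hc01 : R 0 0 * R 0 1 + R 1 0 * R 1 1 + R 2 0 * R 2 1 = 0 := by
    simpa using so3_cols R hR 0 1
  have hc02 : R 0 0 * R 0 2 + R 1 0 * R 1 2 + R 2 0 * R 2 2 = 0 := by
    simpa using so3_cols R hR 0 2
  have hc11 : R 0 1 * R 0 1 + R 1 1 * R 1 1 + R 2 1 * R 2 1 = 1 := by
    simpa using so3_cols R hR 1 1
  have hc12 : R 0 1 * R 0 2 + R 1 1 * R 1 2 + R 2 1 * R 2 2 = 0 := by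
    simpa using so3_cols R hR 1 2
  have hc22 : R 0 2 * R 0 2 + R 1 2 * R 1 2 + R 2 2 * R 2 2 = 1 := by
    simpa using so3_cols R hR 2 2
  have hr00 : R 0 0 * R 0 0 + R 0 1 * R 0 1 + R 0 2 * R 0 2 = 1 := by
    simpa using so3_rows R hR 0 0
  have hr01 : R 0 0 * R 1 0 + R 0 1 * R 1 1 + R 0 2 * R 1 2 = 0 := by
    simpa using so3_rows R hR 0 1
  have hr02 : R 0 0 * R 2 0 + R 0 1 * R 2 1 + R 0 2 * R 2 2 = 0 := by
    simpa using so3_rows R hR 0 2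
  have hr11 : R 1 0 * R 1 0 + R 1 1 * R 1 1 + R 1 2 * R 1 2 = 1 := by
    simpa using so3_rows R hR 1 1
  have hr12 : R 1 0 * R 2 0 + R 1 1 * R 2 1 + R 1 2 * R 2 2 = 0 := by
    simpa using so3_rows R hR 1 2
  have hadj := so3_adj R hR
  rw [Matrix.adjugate_fin_three] at hadj
  have hcof00 : R 1 1 * R 2 2 - R 1 2 * R 2 1 = R 0 0 := by
    simpa using congrFun (congrFun hadj 0) 0
  have hcof10 : -(R 0 1 * R 2 2) + R 0 2 * R 2 1 = R 1 0 := by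
    simpa using congrFun (congrFun hadj 0) 1
  have hcof20 : R 0 1 * R 1 2 - R 0 2 * R 1 1 = R 2 0 := by
    simpa using congrFun (congrFun hadj 0) 2
  have hcof01 : -(R 1 0 * R 2 2) + R 1 2 * R 2 0 = R 0 1 := by
    simpa using congrFun (congrFun hadj 1) 0
  have hcof11 : R 0 0 * R 2 2 - R 0 2 * R 2 0 = R 1 1 := by
    simpa using congrFun (congrFun hadj 1) 1
  have hcof21 : -(R 0 0 * R 1 2) + R 0 2 * R 1 0 = R 2 1 := by
    simpa using congrFun (congrFun hadj 1) 2
  have hcof02 : R 1 0 * R 2 1 - R 1 1 * R 2 0 = R 0 2 := by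
    simpa using congrFun (congrFun hadj 2) 0
  have hcof12 : -(R 0 0 * R 2 1) + R 0 1 * R 2 0 = R 1 2 := by
    simpa using congrFun (congrFun hadj 2) 1
  have hcof22 : R 0 0 * R 1 1 - R 0 1 * R 1 0 = R 2 2 := by
    simpa using congrFun (congrFun hadj 2) 2
  rw [Matrix.trace_fin_three]
  simp only [qf]
  linear_combination (-(v1*v1))*hc00 + (2*v0*v1)*hc01 + (2*v0*v2)*hc02 +
    (-(v0*v0))*hc11 + (2*v1*v2)*hc12 + (-(v0*v0) - v1*v1 + v2*v2)*hc22 +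
    (v0*v0 - v2*v2)*hr00 + (2*v0*v1)*hr01 + (2*v0*v2)*hr02 +
    (v1*v1 - v2*v2)*hr11 + (2*v1*v2)*hr12 +
    (-(2*v0*v0))*hcof00 + (-(2*v0*v1))*hcof01 + (-(2*v0*v2))*hcof02 +
    (-(2*v0*v1))*hcof10 + (-(2*v1*v1))*hcof11 + (-(2*v1*v2))*hcof12 +
    (-(2*v0*v2))*hcof20 + (-(2*v1*v2))*hcof21 + (-(2*v2*v2))*hcof22

end SO3Tri

namespace SO3Tri

lemma so3_trace_bounds (R : Matrix (Fin 3) (Fin 3) ℝ) (hR : SO3 R) :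
    -1 ≤ Matrix.trace R ∧ Matrix.trace R ≤ 3 := by
  have hc00 : R 0 0 * R 0 0 + R 1 0 * R 1 0 + R 2 0 * R 2 0 = 1 := by
    simpa using so3_cols R hR 0 0
  have hc11 : R 0 1 * R 0 1 + R 1 1 * R 1 1 + R 2 1 * R 2 1 = 1 := by
    simpa using so3_cols R hR 1 1
  have hc22 : R 0 2 * R 0 2 + R 1 2 * R 1 2 + R 2 2 * R 2 2 = 1 := by
    simpa using so3_cols R hR 2 2
  have htr : Matrix.trace R = R 0 0 + R 1 1 + R 2 2 := Matrix.trace_fin_three R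
  have hup : Matrix.trace R ≤ 3 := by
    rw [htr]
    nlinarith [sq_nonneg (R 0 0 - 1), sq_nonneg (R 1 1 - 1), sq_nonneg (R 2 2 - 1),
      sq_nonneg (R 1 0), sq_nonneg (R 2 0), sq_nonneg (R 0 1), sq_nonneg (R 2 1),
      sq_nonneg (R 0 2), sq_nonneg (R 1 2)]
  refine ⟨?_, hup⟩
  have k0 := so3_key R hR 1 0 0
  have k1 := so3_key R hR 0 1 0
  have k2 := so3_key R hR 0 0 1
  simp only [qf] at k0 k1 k2
  nlinarith [k0, k1, k2, sq_nonneg (R 2 1 - R 1 2), sq_nonneg (R 0 2 - R 2 0),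
    sq_nonneg (R 1 0 - R 0 1), hup]

lemma so3_qf_lower (R : Matrix (Fin 3) (Fin 3) ℝ) (hR : SO3 R) (v0 v1 v2 : ℝ)
    (hv : v0 ^ 2 + v1 ^ 2 + v2 ^ 2 = 1) :
    (Matrix.trace R - 1) / 2 ≤ qf R v0 v1 v2 := by
  obtain ⟨ht1, _⟩ := so3_trace_bounds R hR
  by_cases ht : Matrix.trace R = -1
  · have hc00 : R 0 0 * R 0 0 + R 1 0 * R 1 0 + R 2 0 * R 2 0 = 1 := by
      simpa using so3_cols R hR 0 0
    have hc01 : R 0 0 * R 0 1 + R 1 0 * R 1 1 + R 2 0 * R 2 1 = 0 := by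
      simpa using so3_cols R hR 0 1
    have hc02 : R 0 0 * R 0 2 + R 1 0 * R 1 2 + R 2 0 * R 2 2 = 0 := by
      simpa using so3_cols R hR 0 2
    have hc11 : R 0 1 * R 0 1 + R 1 1 * R 1 1 + R 2 1 * R 2 1 = 1 := by
      simpa using so3_cols R hR 1 1
    have hc12 : R 0 1 * R 0 2 + R 1 1 * R 1 2 + R 2 1 * R 2 2 = 0 := by
      simpa using so3_cols R hR 1 2
    have hc22 : R 0 2 * R 0 2 + R 1 2 * R 1 2 + R 2 2 * R 2 2 = 1 := by
      simpa using so3_cols R hR 2 2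
    have hu : (R 0 0 * v0 + R 0 1 * v1 + R 0 2 * v2) ^ 2 +
        (R 1 0 * v0 + R 1 1 * v1 + R 1 2 * v2) ^ 2 +
        (R 2 0 * v0 + R 2 1 * v1 + R 2 2 * v2) ^ 2 = 1 := by
      linear_combination (v0^2)*hc00 + (2*v0*v1)*hc01 + (2*v0*v2)*hc02 +
        (v1^2)*hc11 + (2*v1*v2)*hc12 + (v2^2)*hc22 + hv
    rw [ht]
    simp only [qf]
    nlinarith [hu, hv, sq_nonneg (v0 + (R 0 0 * v0 + R 0 1 * v1 + R 0 2 * v2)),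
      sq_nonneg (v1 + (R 1 0 * v0 + R 1 1 * v1 + R 1 2 * v2)),
      sq_nonneg (v2 + (R 2 0 * v0 + R 2 1 * v1 + R 2 2 * v2))]
  · have htpos : 0 < Matrix.trace R + 1 :=
      lt_of_le_of_ne (by linarith) (fun h => ht (by linarith))
    have k := so3_key R hR v0 v1 v2
    rw [hv] at k
    nlinarith [k, sq_nonneg ((R 2 1 - R 1 2) * v0 + (R 0 2 - R 2 0) * v1 + (R 1 0 - R 0 1) * v2),
      htpos]

lemma achieve_neg (R : Matrix (Fin 3) (Fin 3) ℝ) (w0 w1 w2 : ℝ)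
    (hww : w0 ^ 2 + w1 ^ 2 + w2 ^ 2 ≠ 0)
    (h0 : R 0 0 * w0 + R 0 1 * w1 + R 0 2 * w2 = -w0)
    (h1 : R 1 0 * w0 + R 1 1 * w1 + R 1 2 * w2 = -w1)
    (h2 : R 2 0 * w0 + R 2 1 * w1 + R 2 2 * w2 = -w2) :
    ∃ v0 v1 v2 : ℝ, v0 ^ 2 + v1 ^ 2 + v2 ^ 2 = 1 ∧ qf R v0 v1 v2 = -1 := by
  have hn : 0 < w0 ^ 2 + w1 ^ 2 + w2 ^ 2 := lt_of_le_of_ne (by positivity) (Ne.symm hww)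
  set s := Real.sqrt (w0 ^ 2 + w1 ^ 2 + w2 ^ 2) with hsdef
  have hs2 : s ^ 2 = w0 ^ 2 + w1 ^ 2 + w2 ^ 2 := Real.sq_sqrt hn.le
  have hsne : s ≠ 0 := (Real.sqrt_pos.mpr hn).ne'
  refine ⟨w0 / s, w1 / s, w2 / s, ?_, ?_⟩
  · field_simp
    linarith [hs2]
  · simp only [qf]
    field_simp
    linear_combination w0 * h0 + w1 * h1 + w2 * h2 + hs2

end SO3Tri

namespace SO3Tri

lemma so3_exists (R : Matrix (Fin 3) (Fin 3) ℝ) (hR : SO3 R) :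
    ∃ v0 v1 v2 : ℝ, v0 ^ 2 + v1 ^ 2 + v2 ^ 2 = 1 ∧
      qf R v0 v1 v2 = (Matrix.trace R - 1) / 2 := by
  obtain ⟨ht1, ht3⟩ := so3_trace_bounds R hR
  by_cases ht : Matrix.trace R = -1
  · -- symmetric case: rotation by π
    have k0 := so3_key R hR 1 0 0
    have k1 := so3_key R hR 0 1 0
    have k2 := so3_key R hR 0 0 1
    rw [ht] at k0 k1 k2
    simp only [qf] at k0 k1 k2
    have hs0 : R 2 1 = R 1 2 := by
      have h2 : (R 2 1 - R 1 2) ^ 2 = 0 := by linear_combination -k0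
      have h3 := (pow_eq_zero_iff two_ne_zero).mp h2
      linarith
    have hs1 : R 0 2 = R 2 0 := by
      have h2 : (R 0 2 - R 2 0) ^ 2 = 0 := by linear_combination -k1
      have h3 := (pow_eq_zero_iff two_ne_zero).mp h2
      linarith
    have hs2 : R 1 0 = R 0 1 := by
      have h2 : (R 1 0 - R 0 1) ^ 2 = 0 := by linear_combination -k2
      have h3 := (pow_eq_zero_iff two_ne_zero).mp h2
      linarith
    have hc00 : R 0 0 * R 0 0 + R 1 0 * R 1 0 + R 2 0 * R 2 0 = 1 := by
      simpa using so3_cols R hR 0 0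
    have hc01 : R 0 0 * R 0 1 + R 1 0 * R 1 1 + R 2 0 * R 2 1 = 0 := by
      simpa using so3_cols R hR 0 1
    have hc02 : R 0 0 * R 0 2 + R 1 0 * R 1 2 + R 2 0 * R 2 2 = 0 := by
      simpa using so3_cols R hR 0 2
    have hc11 : R 0 1 * R 0 1 + R 1 1 * R 1 1 + R 2 1 * R 2 1 = 1 := by
      simpa using so3_cols R hR 1 1
    have hc12 : R 0 1 * R 0 2 + R 1 1 * R 1 2 + R 2 1 * R 2 2 = 0 := by
      simpa using so3_cols R hR 1 2
    have hc22 : R 0 2 * R 0 2 + R 1 2 * R 1 2 + R 2 2 * R 2 2 = 1 := by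
      simpa using so3_cols R hR 2 2
    have main : ∀ v0 v1 v2 : ℝ, v0 ^ 2 + v1 ^ 2 + v2 ^ 2 = 1 → qf R v0 v1 v2 = -1 →
        qf R v0 v1 v2 = (Matrix.trace R - 1) / 2 := by
      intro v0 v1 v2 _ hq
      rw [hq, ht]; norm_num
    by_cases h0 : R 0 0 = 1
    · by_cases h1 : R 1 1 = 1
      · -- use k = 2
        have h2 : R 2 2 ≠ 1 := by
          rw [Matrix.trace_fin_three] at ht
          intro h
          rw [h0, h1, h] at ht
          norm_num at ht
        have hcalc : (R 0 2) ^ 2 + (R 1 2) ^ 2 + (R 2 2 - 1) ^ 2 = 2 - 2 * R 2 2 := by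
          linear_combination hc22
        have hww : (R 0 2) ^ 2 + (R 1 2) ^ 2 + (R 2 2 - 1) ^ 2 ≠ 0 := by
          rw [hcalc]; intro h; apply h2; linarith
        have e0 : R 0 0 * (R 0 2) + R 0 1 * (R 1 2) + R 0 2 * (R 2 2 - 1) = -(R 0 2) := by
          linear_combination hc02 - R 1 2 * hs2 + R 2 2 * hs1
        have e1 : R 1 0 * (R 0 2) + R 1 1 * (R 1 2) + R 1 2 * (R 2 2 - 1) = -(R 1 2) := by
          linear_combination hc12 + R 0 2 * hs2 - R 2 2 * hs0
        have e2 : R 2 0 * (R 0 2) + R 2 1 * (R 1 2) + R 2 2 * (R 2 2 - 1) = -(R 2 2 - 1) := by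
          linear_combination hc22 - R 0 2 * hs1 + R 1 2 * hs0
        obtain ⟨v0, v1, v2, hv, hq⟩ := achieve_neg R _ _ _ hww e0 e1 e2
        exact ⟨v0, v1, v2, hv, main v0 v1 v2 hv hq⟩
      · -- use k = 1
        have hcalc : (R 0 1) ^ 2 + (R 1 1 - 1) ^ 2 + (R 2 1) ^ 2 = 2 - 2 * R 1 1 := by
          linear_combination hc11
        have hww : (R 0 1) ^ 2 + (R 1 1 - 1) ^ 2 + (R 2 1) ^ 2 ≠ 0 := by
          rw [hcalc]; intro h; apply h1; linarith
        have e0 : R 0 0 * (R 0 1) + R 0 1 * (R 1 1 - 1) + R 0 2 * (R 2 1) = -(R 0 1) := by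
          linear_combination hc01 - R 1 1 * hs2 + R 2 1 * hs1
        have e1 : R 1 0 * (R 0 1) + R 1 1 * (R 1 1 - 1) + R 1 2 * (R 2 1) = -(R 1 1 - 1) := by
          linear_combination hc11 + R 0 1 * hs2 - R 2 1 * hs0
        have e2 : R 2 0 * (R 0 1) + R 2 1 * (R 1 1 - 1) + R 2 2 * (R 2 1) = -(R 2 1) := by
          linear_combination hc12 - R 0 1 * hs1 + R 1 1 * hs0
        obtain ⟨v0, v1, v2, hv, hq⟩ := achieve_neg R _ _ _ hww e0 e1 e2
        exact ⟨v0, v1, v2, hv, main v0 v1 v2 hv hq⟩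
    · -- use k = 0
      have hcalc : (R 0 0 - 1) ^ 2 + (R 1 0) ^ 2 + (R 2 0) ^ 2 = 2 - 2 * R 0 0 := by
        linear_combination hc00
      have hww : (R 0 0 - 1) ^ 2 + (R 1 0) ^ 2 + (R 2 0) ^ 2 ≠ 0 := by
        rw [hcalc]; intro h; apply h0; linarith
      have e0 : R 0 0 * (R 0 0 - 1) + R 0 1 * (R 1 0) + R 0 2 * (R 2 0) = -(R 0 0 - 1) := by
        linear_combination hc00 - R 1 0 * hs2 + R 2 0 * hs1
      have e1 : R 1 0 * (R 0 0 - 1) + R 1 1 * (R 1 0) + R 1 2 * (R 2 0) = -(R 1 0) := by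
        linear_combination hc01 + R 0 0 * hs2 - R 2 0 * hs0
      have e2 : R 2 0 * (R 0 0 - 1) + R 2 1 * (R 1 0) + R 2 2 * (R 2 0) = -(R 2 0) := by
        linear_combination hc02 - R 0 0 * hs1 + R 1 0 * hs0
      obtain ⟨v0, v1, v2, hv, hq⟩ := achieve_neg R _ _ _ hww e0 e1 e2
      exact ⟨v0, v1, v2, hv, main v0 v1 v2 hv hq⟩
  · -- trace ≠ -1
    have htpos : Matrix.trace R + 1 ≠ 0 := fun h => ht (by linarith)
    by_cases hz : (R 2 1 - R 1 2) ^ 2 + (R 0 2 - R 2 0) ^ 2 = 0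
    · have hz0 : (R 2 1 - R 1 2) ^ 2 = 0 := by nlinarith [sq_nonneg (R 0 2 - R 2 0)]
      refine ⟨1, 0, 0, by norm_num, ?_⟩
      have k := so3_key R hR 1 0 0
      have hS : ((R 2 1 - R 1 2) * 1 + (R 0 2 - R 2 0) * 0 + (R 1 0 - R 0 1) * 0) ^ 2
          = 0 := by linear_combination hz0
      rw [hS] at k
      have hX := (mul_eq_zero.mp k).resolve_left htpos
      simp only [qf] at hX ⊢
      linarith [hX]
    · have hzpos : 0 < (R 2 1 - R 1 2) ^ 2 + (R 0 2 - R 2 0) ^ 2 :=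
        lt_of_le_of_ne (by positivity) (Ne.symm hz)
      set s := Real.sqrt ((R 2 1 - R 1 2) ^ 2 + (R 0 2 - R 2 0) ^ 2) with hsdef
      have hs2 : s ^ 2 = (R 2 1 - R 1 2) ^ 2 + (R 0 2 - R 2 0) ^ 2 := Real.sq_sqrt hzpos.le
      have hsne : s ≠ 0 := (Real.sqrt_pos.mpr hzpos).ne'
      have hunit : ((R 0 2 - R 2 0) / s) ^ 2 + (-(R 2 1 - R 1 2) / s) ^ 2 + (0:ℝ) ^ 2 = 1 := by
        field_simp
        linear_combination -hs2
      refine ⟨(R 0 2 - R 2 0) / s, -(R 2 1 - R 1 2) / s, 0, hunit, ?_⟩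
      have k := so3_key R hR ((R 0 2 - R 2 0) / s) (-(R 2 1 - R 1 2) / s) 0
      have hS : ((R 2 1 - R 1 2) * ((R 0 2 - R 2 0) / s) +
          (R 0 2 - R 2 0) * (-(R 2 1 - R 1 2) / s) + (R 1 0 - R 0 1) * 0) ^ 2 = 0 := by
        ring
      rw [hS, hunit] at k
      have hX := (mul_eq_zero.mp k).resolve_left htpos
      linarith [hX]

lemma dot_le_one (a0 a1 a2 b0 b1 b2 : ℝ) (ha : a0 ^ 2 + a1 ^ 2 + a2 ^ 2 = 1)
    (hb : b0 ^ 2 + b1 ^ 2 + b2 ^ 2 = 1) :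
    a0 * b0 + a1 * b1 + a2 * b2 ≤ 1 := by
  nlinarith [sq_nonneg (a0 - b0), sq_nonneg (a1 - b1), sq_nonneg (a2 - b2)]

lemma arccos_anti {x y : ℝ} (h : x ≤ y) : Real.arccos y ≤ Real.arccos x := by
  rw [Real.arccos_eq_pi_div_two_sub_arcsin, Real.arccos_eq_pi_div_two_sub_arcsin]
  have := Real.monotone_arcsin h
  linarith

lemma arccos_tri {p q s : ℝ} (hp1 : -1 ≤ p) (hp2 : p ≤ 1) (hq1 : -1 ≤ q) (hq2 : q ≤ 1)
    (hg : (s - p * q) ^ 2 ≤ (1 - p ^ 2) * (1 - q ^ 2)) :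
    Real.arccos s ≤ Real.arccos p + Real.arccos q := by
  by_cases hpi : Real.pi ≤ Real.arccos p + Real.arccos q
  · exact (Real.arccos_le_pi s).trans hpi
  push_neg at hpi
  have ha := Real.arccos_nonneg p
  have hb := Real.arccos_nonneg q
  have hXp : (0:ℝ) ≤ 1 - p ^ 2 := by nlinarith
  have hXq : (0:ℝ) ≤ 1 - q ^ 2 := by nlinarith
  have hcos : Real.cos (Real.arccos p + Real.arccos q) =
      p * q - Real.sqrt ((1 - p ^ 2) * (1 - q ^ 2)) := by
    rw [Real.cos_add, Real.cos_arccos hp1 hp2, Real.cos_arccos hq1 hq2,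
      Real.sin_arccos, Real.sin_arccos, ← Real.sqrt_mul hXp]
  have habs : |s - p * q| ≤ Real.sqrt ((1 - p ^ 2) * (1 - q ^ 2)) := by
    rw [← Real.sqrt_sq_eq_abs]
    exact Real.sqrt_le_sqrt hg
  have hle : Real.cos (Real.arccos p + Real.arccos q) ≤ s := by
    have h1 := neg_abs_le (s - p * q)
    rw [hcos]
    linarith [habs]
  calc Real.arccos s ≤ Real.arccos (Real.cos (Real.arccos p + Real.arccos q)) :=
        arccos_anti hle
    _ = Real.arccos p + Real.arccos q := Real.arccos_cos (by linarith) hpi.le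

end SO3Tri

namespace SO3Tri

set_option maxHeartbeats 1600000 in
lemma core (M N : Matrix (Fin 3) (Fin 3) ℝ) (hM : SO3 M) (hN : SO3 N) :
    Real.arccos ((Matrix.trace (M * N) - 1) / 2) ≤
      Real.arccos ((Matrix.trace M - 1) / 2) + Real.arccos ((Matrix.trace N - 1) / 2) := by
  have hMN : SO3 (M * N) := by
    constructor
    · calc (M * N).transpose * (M * N) = N.transpose * (M.transpose * M * N) := by
            rw [Matrix.transpose_mul]; rw [mul_assoc]; rw [mul_assoc]
        _ = 1 := by rw [hM.1, one_mul, hN.1]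
    · rw [Matrix.det_mul, hM.2, hN.2, one_mul]
  obtain ⟨v0, v1, v2, hv, hQ⟩ := so3_exists (M * N) hMN
  obtain ⟨htM1, htM3⟩ := so3_trace_bounds M hM
  obtain ⟨htN1, htN3⟩ := so3_trace_bounds N hN
  have hrM00 : M 0 0 * M 0 0 + M 0 1 * M 0 1 + M 0 2 * M 0 2 = 1 := by
    simpa using so3_rows M hM 0 0
  have hrM01 : M 0 0 * M 1 0 + M 0 1 * M 1 1 + M 0 2 * M 1 2 = 0 := by
    simpa using so3_rows M hM 0 1
  have hrM02 : M 0 0 * M 2 0 + M 0 1 * M 2 1 + M 0 2 * M 2 2 = 0 := by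
    simpa using so3_rows M hM 0 2
  have hrM11 : M 1 0 * M 1 0 + M 1 1 * M 1 1 + M 1 2 * M 1 2 = 1 := by
    simpa using so3_rows M hM 1 1
  have hrM12 : M 1 0 * M 2 0 + M 1 1 * M 2 1 + M 1 2 * M 2 2 = 0 := by
    simpa using so3_rows M hM 1 2
  have hrM22 : M 2 0 * M 2 0 + M 2 1 * M 2 1 + M 2 2 * M 2 2 = 1 := by
    simpa using so3_rows M hM 2 2
  have hcN00 : N 0 0 * N 0 0 + N 1 0 * N 1 0 + N 2 0 * N 2 0 = 1 := by
    simpa using so3_cols N hN 0 0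
  have hcN01 : N 0 0 * N 0 1 + N 1 0 * N 1 1 + N 2 0 * N 2 1 = 0 := by
    simpa using so3_cols N hN 0 1
  have hcN02 : N 0 0 * N 0 2 + N 1 0 * N 1 2 + N 2 0 * N 2 2 = 0 := by
    simpa using so3_cols N hN 0 2
  have hcN11 : N 0 1 * N 0 1 + N 1 1 * N 1 1 + N 2 1 * N 2 1 = 1 := by
    simpa using so3_cols N hN 1 1
  have hcN12 : N 0 1 * N 0 2 + N 1 1 * N 1 2 + N 2 1 * N 2 2 = 0 := by
    simpa using so3_cols N hN 1 2
  have hcN22 : N 0 2 * N 0 2 + N 1 2 * N 1 2 + N 2 2 * N 2 2 = 1 := by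
    simpa using so3_cols N hN 2 2
  obtain ⟨u0, hu0⟩ : ∃ x : ℝ, x = M 0 0 * v0 + M 1 0 * v1 + M 2 0 * v2 := ⟨_, rfl⟩
  obtain ⟨u1, hu1⟩ : ∃ x : ℝ, x = M 0 1 * v0 + M 1 1 * v1 + M 2 1 * v2 := ⟨_, rfl⟩
  obtain ⟨u2, hu2⟩ : ∃ x : ℝ, x = M 0 2 * v0 + M 1 2 * v1 + M 2 2 * v2 := ⟨_, rfl⟩
  obtain ⟨w0, hw0⟩ : ∃ x : ℝ, x = N 0 0 * v0 + N 0 1 * v1 + N 0 2 * v2 := ⟨_, rfl⟩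
  obtain ⟨w1, hw1⟩ : ∃ x : ℝ, x = N 1 0 * v0 + N 1 1 * v1 + N 1 2 * v2 := ⟨_, rfl⟩
  obtain ⟨w2, hw2⟩ : ∃ x : ℝ, x = N 2 0 * v0 + N 2 1 * v1 + N 2 2 * v2 := ⟨_, rfl⟩
  have hu : u0 ^ 2 + u1 ^ 2 + u2 ^ 2 = 1 := by
    rw [hu0, hu1, hu2]
    linear_combination (v0 ^ 2) * hrM00 + (2 * v0 * v1) * hrM01 + (2 * v0 * v2) * hrM02 +
      (v1 ^ 2) * hrM11 + (2 * v1 * v2) * hrM12 + (v2 ^ 2) * hrM22 + hv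
  have hw : w0 ^ 2 + w1 ^ 2 + w2 ^ 2 = 1 := by
    rw [hw0, hw1, hw2]
    linear_combination (v0 ^ 2) * hcN00 + (2 * v0 * v1) * hcN01 + (2 * v0 * v2) * hcN02 +
      (v1 ^ 2) * hcN11 + (2 * v1 * v2) * hcN12 + (v2 ^ 2) * hcN22 + hv
  have hpq : qf M v0 v1 v2 = u0 * v0 + u1 * v1 + u2 * v2 := by
    rw [hu0, hu1, hu2]; simp only [qf]; ring
  have hqq : qf N v0 v1 v2 = v0 * w0 + v1 * w1 + v2 * w2 := by
    rw [hw0, hw1, hw2]; simp only [qf]; try ring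
  have hp : (Matrix.trace M - 1) / 2 ≤ u0 * v0 + u1 * v1 + u2 * v2 := by
    rw [← hpq]; exact so3_qf_lower M hM v0 v1 v2 hv
  have hq' : (Matrix.trace N - 1) / 2 ≤ v0 * w0 + v1 * w1 + v2 * w2 := by
    rw [← hqq]; exact so3_qf_lower N hN v0 v1 v2 hv
  have hs : u0 * w0 + u1 * w1 + u2 * w2 = (Matrix.trace (M * N) - 1) / 2 := by
    rw [← hQ, hu0, hu1, hu2, hw0, hw1, hw2]
    simp only [qf, Matrix.mul_apply, Fin.sum_univ_three]
    ring
  have hp2 : u0 * v0 + u1 * v1 + u2 * v2 ≤ 1 := dot_le_one u0 u1 u2 v0 v1 v2 hu hv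
  have hq2 : v0 * w0 + v1 * w1 + v2 * w2 ≤ 1 := dot_le_one v0 v1 v2 w0 w1 w2 hv hw
  have hp1 : -1 ≤ u0 * v0 + u1 * v1 + u2 * v2 := by linarith
  have hq1 : -1 ≤ v0 * w0 + v1 * w1 + v2 * w2 := by linarith
  have hdet : (u0 ^ 2 + u1 ^ 2 + u2 ^ 2) *
      ((v0 ^ 2 + v1 ^ 2 + v2 ^ 2) * (w0 ^ 2 + w1 ^ 2 + w2 ^ 2) -
        (v0 * w0 + v1 * w1 + v2 * w2) ^ 2) -
      (u0 * v0 + u1 * v1 + u2 * v2) *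
      ((u0 * v0 + u1 * v1 + u2 * v2) * (w0 ^ 2 + w1 ^ 2 + w2 ^ 2) -
        (v0 * w0 + v1 * w1 + v2 * w2) * (u0 * w0 + u1 * w1 + u2 * w2)) +
      (u0 * w0 + u1 * w1 + u2 * w2) *
      ((u0 * v0 + u1 * v1 + u2 * v2) * (v0 * w0 + v1 * w1 + v2 * w2) -
        (v0 ^ 2 + v1 ^ 2 + v2 ^ 2) * (u0 * w0 + u1 * w1 + u2 * w2)) =
      (u0 * (v1 * w2 - v2 * w1) - v0 * (u1 * w2 - u2 * w1) + w0 * (u1 * v2 - u2 * v1)) ^ 2 := by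
    ring
  rw [hu, hv, hw] at hdet
  have hgram : ((u0 * w0 + u1 * w1 + u2 * w2) -
      (u0 * v0 + u1 * v1 + u2 * v2) * (v0 * w0 + v1 * w1 + v2 * w2)) ^ 2 ≤
      (1 - (u0 * v0 + u1 * v1 + u2 * v2) ^ 2) * (1 - (v0 * w0 + v1 * w1 + v2 * w2) ^ 2) := by
    have hkey : (1 - (u0 * v0 + u1 * v1 + u2 * v2) ^ 2) *
        (1 - (v0 * w0 + v1 * w1 + v2 * w2) ^ 2) -
        ((u0 * w0 + u1 * w1 + u2 * w2) -
          (u0 * v0 + u1 * v1 + u2 * v2) * (v0 * w0 + v1 * w1 + v2 * w2)) ^ 2 =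
        (u0 * (v1 * w2 - v2 * w1) - v0 * (u1 * w2 - u2 * w1) + w0 * (u1 * v2 - u2 * v1)) ^ 2 := by
      linear_combination hdet
    linarith [hkey, sq_nonneg (u0 * (v1 * w2 - v2 * w1) - v0 * (u1 * w2 - u2 * w1) +
      w0 * (u1 * v2 - u2 * v1))]
  have tri := arccos_tri hp1 hp2 hq1 hq2 hgram
  rw [hs] at tri
  exact tri.trans (add_le_add (arccos_anti hp) (arccos_anti hq'))

end SO3Tri

/-- Triangle inequality of the geodesic distance at the identity. -/
theorem stmt5 (A B : Matrix (Fin 3) (Fin 3) ℝ) (hA : SO3 A) (hB : SO3 B) :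
    geo A B ≤ geo A 1 + geo B 1 ∧
    Real.arccos ((Matrix.trace (A.transpose * B) - 1) / 2) ≤
      Real.arccos ((Matrix.trace A - 1) / 2) +
        Real.arccos ((Matrix.trace B - 1) / 2) := by
  have hAT : SO3 A.transpose := by
    constructor
    · rw [Matrix.transpose_transpose]; exact mul_eq_one_comm.mp hA.1
    · rw [Matrix.det_transpose]; exact hA.2
  have h := SO3Tri.core A.transpose B hAT hB
  rw [Matrix.trace_transpose] at h
  refine ⟨?_, h⟩
  simp only [geo, Matrix.mul_one, Matrix.trace_transpose]
  rw [abs_of_nonneg (Real.arccos_nonneg _), abs_of_nonneg (Real.arccos_nonneg _),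
    abs_of_nonneg (Real.arccos_nonneg _)]
  exact h
end

section
/- Let s > 0, R ∈ SO(3), t ∈ ℝ³, and let P_i, P_j, Q_i, Q_j, ε_i, ε_j ∈ ℝ³ satisfy Q_i = s·R·P_i + t + ε_i and Q_j = s·R·P_j + t + ε_j, with P_i ≠ P_j. Then the scale-based invariant I^s_{ij} = ‖Q_i − Q_j‖/‖P_i − P_j‖ satisfies the two-sided bound s − ‖ε_i − ε_j‖/‖P_i − P_j‖ ≤ I^s_{ij} ≤ s + ‖ε_i − ε_j‖/‖P_i − P_j‖. -/
open scoped RealInnerProductSpace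

lemma rotAct_norm (R : Matrix (Fin 3) (Fin 3) ℝ) (hR : R.transpose * R = 1)
    (v : EuclideanSpace ℝ (Fin 3)) : ‖rotAct R v‖ = ‖v‖ := by
  have h1 : ‖rotAct R v‖ ^ 2 = ‖v‖ ^ 2 := by
    have h : (inner ℝ (rotAct R v) (rotAct R v) : ℝ) = inner ℝ v v := by
      show (inner ℝ (Matrix.toEuclideanLin R v) (Matrix.toEuclideanLin R v) : ℝ) = _
      rw [← LinearMap.adjoint_inner_left, ← Matrix.toEuclideanLin_conjTranspose_eq_adjoint]
      have hc : R.conjTranspose = R.transpose := rfl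
      rw [hc]
      have hcomp : Matrix.toEuclideanLin R.transpose (Matrix.toEuclideanLin R v) = v := by
        simp [Matrix.toEuclideanLin_apply, Matrix.mulVec_mulVec, hR]
      rw [hcomp]
    rw [← real_inner_self_eq_norm_sq, ← real_inner_self_eq_norm_sq]
    exact h
  nlinarith [norm_nonneg (rotAct R v), norm_nonneg v, h1]

/-- Two-sided bound on the pairwise scale-based invariant. -/
theorem stmt9 (s : ℝ) (hs : 0 < s) (R : Matrix (Fin 3) (Fin 3) ℝ) (hR : SO3 R)
    (t Pi Pj Qi Qj εi εj : EuclideanSpace ℝ (Fin 3))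
    (hQi : Qi = s • rotAct R Pi + t + εi) (hQj : Qj = s • rotAct R Pj + t + εj)
    (hP : Pi ≠ Pj) :
    s - ‖εi - εj‖ / ‖Pi - Pj‖ ≤ ‖Qi - Qj‖ / ‖Pi - Pj‖ ∧
    ‖Qi - Qj‖ / ‖Pi - Pj‖ ≤ s + ‖εi - εj‖ / ‖Pi - Pj‖ := by
  have hPne : Pi - Pj ≠ 0 := sub_ne_zero.mpr hP
  have hPpos : 0 < ‖Pi - Pj‖ := norm_pos_iff.mpr hPne
  have hdiff : Qi - Qj = s • rotAct R (Pi - Pj) + (εi - εj) := by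
    simp only [hQi, hQj, rotAct, map_sub, smul_sub]
    abel
  have hRnorm : ‖s • rotAct R (Pi - Pj)‖ = s * ‖Pi - Pj‖ := by
    rw [norm_smul, rotAct_norm R hR.1, Real.norm_eq_abs, abs_of_pos hs]
  have h1 : ‖Qi - Qj‖ ≤ s * ‖Pi - Pj‖ + ‖εi - εj‖ := by
    rw [hdiff]; exact (norm_add_le _ _).trans (by rw [hRnorm])
  have h2 : s * ‖Pi - Pj‖ - ‖εi - εj‖ ≤ ‖Qi - Qj‖ := by
    have := norm_add_le (s • rotAct R (Pi - Pj) + (εi - εj)) (-(εi - εj))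
    simp only [add_neg_cancel_right, norm_neg] at this
    rw [hdiff]; linarith [hRnorm ▸ this]
  constructor
  · rw [le_div_iff₀ hPpos, sub_mul, div_mul_cancel₀ _ hPpos.ne']; linarith
  · rw [div_le_iff₀ hPpos, add_mul, div_mul_cancel₀ _ hPpos.ne']; linarith
end
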